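/- arXiv:2306.15034 — 2 statements merged into one kernel-verified Lean document; each statement's English description precedes it below -/
import Mathlib

section
/- Let A be a finite-dimensional evolution algebra with natural basis B = {e_i}_{i in Λ}. Then the absorption radical of A equals the span of the basis elements corresponding to acyclic vertices: rad(A) = span{e_i : i is an acyclic vertex of Γ(A,B)}. Equivalently, with m = asi(A), the set λ_m(B) is exactly the set of acyclic vertices of Γ(A,B). -/
open Submodule

section EvolutionPreamble

/-- The set of `k`-th generation descendants of a vertex in a directed graph
given by an edge relation `E`; `Dk E 0 i = {i}`. -/
def Dk {V : Type*} (E : V → V → Prop) : ℕ → V → Set V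
  | 0, i => {i}
  | n + 1, i => {k | ∃ j ∈ Dk E n i, E j k}

/-- A vertex is cyclic if there is a (possibly trivial) path from it to a vertex
lying on a cycle. -/
def IsCyclicVertex {V : Type*} (E : V → V → Prop) (i : V) : Prop :=
  ∃ j, Relation.ReflTransGen E i j ∧ Relation.TransGen E j j

/-- Connectedness of a directed graph: every nontrivial partition of the
vertex set is crossed by an edge (in one direction or the other). -/
def GraphConnected {V : Type*} (E : V → V → Prop) : Prop :=
  ∀ s : Set V, s.Nonempty → sᶜ.Nonempty → ∃ x ∈ s, ∃ y ∈ sᶜ, E x y ∨ E y x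

variable {K : Type*} [Field K] {A : Type*} [NonUnitalNonAssocRing A]
  [Module K A] [SMulCommClass K A A] [IsScalarTower K A A] {ι : Type*}

/-- A basis is natural if distinct basis vectors multiply to zero. -/
def IsNaturalBasis (B : Module.Basis ι K A) : Prop := ∀ i j, i ≠ j → B i * B j = 0

/-- Edge relation of the directed graph `Γ(A,B)` associated to an evolution
algebra `A` with natural basis `B`: `(i,k)` is an edge iff the structure
constant `w_{ik}` is nonzero. -/
def edge (B : Module.Basis ι K A) (i k : ι) : Prop := B.repr (B i * B i) k ≠ 0

/-- First-generation descendants in `Γ(A,B)`. -/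
def D1 (B : Module.Basis ι K A) (i : ι) : Set ι := {k | edge B i k}

/-- The increasing chain of index sets `λ_k(B)`: `λ_0 = ∅`,
`λ_{k+1}(B) = {i : D¹(i) ⊆ λ_k(B)}`.  In particular
`λ_1(B) = {i : e_i² = 0}`. -/
def lam (B : Module.Basis ι K A) : ℕ → Set ι
  | 0 => ∅
  | n + 1 => {i | ∀ k, edge B i k → k ∈ lam B n}

/-- `I` is a (two-sided) ideal. -/
def IsIdeal (I : Submodule K A) : Prop := ∀ x ∈ I, ∀ a : A, x * a ∈ I ∧ a * x ∈ I

/-- The absorption property: `xA ⊆ I` implies `x ∈ I`. -/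
def HasAbsorption (I : Submodule K A) : Prop := ∀ x : A, (∀ a : A, x * a ∈ I) → x ∈ I

/-- The absorption radical: intersection of all ideals with the absorption property. -/
def rad (K : Type*) (A : Type*) [Field K] [NonUnitalNonAssocRing A]
    [Module K A] [SMulCommClass K A A] [IsScalarTower K A A] : Submodule K A :=
  sInf {I : Submodule K A | IsIdeal I ∧ HasAbsorption I}

lemma rad_isIdeal : IsIdeal (rad K A) := by
  intro x hx a
  rw [rad, Submodule.mem_sInf] at hx
  constructor <;>
    · rw [rad, Submodule.mem_sInf]
      intro I hI
      first
        | exact (hI.1 x (hx I hI) a).1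
        | exact (hI.1 x (hx I hI) a).2

/-- The annihilator `ann(A) = {x : xA = Ax = 0}` as a submodule. -/
def annSub (K : Type*) (A : Type*) [Field K] [NonUnitalNonAssocRing A]
    [Module K A] [SMulCommClass K A A] [IsScalarTower K A A] : Submodule K A where
  carrier := {x | ∀ a : A, x * a = 0 ∧ a * x = 0}
  add_mem' := by
    intro x y hx hy a
    constructor
    · rw [add_mul, (hx a).1, (hy a).1, add_zero]
    · rw [mul_add, (hx a).2, (hy a).2, add_zero]
  zero_mem' := by intro a; simp
  smul_mem' := by
    intro c x hx a
    constructor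
    · rw [smul_mul_assoc, (hx a).1, smul_zero]
    · rw [mul_smul_comm, (hx a).2, smul_zero]

/-- The upper annihilating series: `ann⁰(A) = 0`,
`annⁱ⁺¹(A) = {x : xA ∪ Ax ⊆ annⁱ(A)}`. -/
def annSeries (K : Type*) (A : Type*) [Field K] [NonUnitalNonAssocRing A]
    [Module K A] [SMulCommClass K A A] [IsScalarTower K A A] : ℕ → Submodule K A
  | 0 => ⊥
  | n + 1 =>
    { carrier := {x | ∀ a : A, x * a ∈ annSeries K A n ∧ a * x ∈ annSeries K A n}
      add_mem' := by
        intro x y hx hy a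
        constructor
        · rw [add_mul]; exact add_mem (hx a).1 (hy a).1
        · rw [mul_add]; exact add_mem (hx a).2 (hy a).2
      zero_mem' := by intro a; simp
      smul_mem' := by
        intro c x hx a
        constructor
        · rw [smul_mul_assoc]; exact smul_mem _ c (hx a).1
        · rw [mul_smul_comm]; exact smul_mem _ c (hx a).2 }

/-- The annihilator stabilizing index `asi(A)`. -/
noncomputable def asi (K : Type*) (A : Type*) [Field K] [NonUnitalNonAssocRing A]
    [Module K A] [SMulCommClass K A A] [IsScalarTower K A A] : ℕ :=
  sInf {q : ℕ | annSeries K A q = annSeries K A (q + 1)}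

/-- Product of two submodules (span of pairwise products). -/
def smulSub (I J : Submodule K A) : Submodule K A :=
  Submodule.span K (Set.image2 (· * ·) (I : Set A) (J : Set A))

/-- Powers of a subalgebra/ideal, with `N^{k} = Σ_{i+j=k, i,j ≥ 1} Nⁱ Nʲ`. -/
def npow (I : Submodule K A) : ℕ → Submodule K A
  | 0 => ⊥
  | 1 => I
  | n + 2 => ⨆ i : Fin (n + 1), smulSub (npow I (i.1 + 1)) (npow I (n + 1 - i.1))
  termination_by n => n
  decreasing_by
  · have := i.isLt; omega
  · have := i.isLt; omega

/-- `I` is an ideal of the subalgebra `N`. -/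
def IsIdealIn (N I : Submodule K A) : Prop :=
  I ≤ N ∧ ∀ x ∈ I, ∀ a ∈ N, x * a ∈ I ∧ a * x ∈ I

/-- The (sub)algebra `N` is decomposable: it is the direct sum of two nonzero
ideals of `N`. -/
def DecomposableIn (N : Submodule K A) : Prop :=
  ∃ I J : Submodule K A, IsIdealIn N I ∧ IsIdealIn N J ∧ I ≠ ⊥ ∧ J ≠ ⊥ ∧
    I ⊓ J = ⊥ ∧ I ⊔ J = N

/-- Multiplication inside an ideal `N` (an ideal is closed under products). -/
def subMul {N : Submodule K A} (hN : IsIdeal N) (x y : N) : N :=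
  ⟨(x : A) * (y : A), (hN x x.2 y).1⟩

/-- The induced multiplication on the quotient `A ⧸ I` by an ideal `I`. -/
def quotMul (I : Submodule K A) (hI : IsIdeal I) (x y : A ⧸ I) : A ⧸ I :=
  Quotient.liftOn₂ x y (fun a b => Submodule.Quotient.mk (a * b)) (by
    intro a b a' b' ha hb
    have ha' : a - a' ∈ I := (Submodule.quotientRel_def I).mp ha
    have hb' : b - b' ∈ I := (Submodule.quotientRel_def I).mp hb
    refine (Submodule.Quotient.eq I).mpr ?_
    have h : a * b - a' * b' = a * (b - b') + (a - a') * b' := by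
      rw [mul_sub, sub_mul]; abel
    rw [h]
    exact add_mem (hI _ hb' a).2 (hI _ ha' b').1)

/-- Edge relation of the graph associated to the quotient evolution algebra
`A ⧸ I` relative to a basis `C`. -/
def edgeQ {κ : Type*} (I : Submodule K A) (hI : IsIdeal I)
    (C : Module.Basis κ K (A ⧸ I)) (i k : κ) : Prop :=
  C.repr (quotMul I hI (C i) (C i)) k ≠ 0

end EvolutionPreamble

section AuxEvolution

variable {K : Type*} [Field K] {A : Type*} [NonUnitalNonAssocRing A]
  [Module K A] [SMulCommClass K A A] [IsScalarTower K A A] {ι : Type*}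

lemma aux_mul_comm (B : Module.Basis ι K A) (hB : IsNaturalBasis B) (x y : A) : x * y = y * x := by
  have h : (LinearMap.mul K A) = (LinearMap.mul K A).flip := by
    apply B.ext; intro i; apply B.ext; intro j
    simp only [LinearMap.mul_apply', LinearMap.flip_apply]
    by_cases hij : i = j
    · subst hij; rfl
    · rw [hB i j hij, hB j i (Ne.symm hij)]
  calc x * y = LinearMap.mul K A x y := rfl
    _ = (LinearMap.mul K A).flip x y := by rw [← h]
    _ = y * x := rfl

lemma aux_mem_lam_succ (B : Module.Basis ι K A) {n : ℕ} {i : ι} :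
    i ∈ lam B (n + 1) ↔ ∀ k, edge B i k → k ∈ lam B n := Iff.rfl

lemma aux_mem_ann_succ {n : ℕ} {x : A} :
    x ∈ annSeries K A (n + 1) ↔
      ∀ a : A, x * a ∈ annSeries K A n ∧ a * x ∈ annSeries K A n := Iff.rfl

lemma aux_lam_mono (B : Module.Basis ι K A) : ∀ n, lam B n ⊆ lam B (n + 1)
  | 0 => by intro i hi; cases hi
  | n + 1 => fun i hi k hk => aux_lam_mono B n (hi k hk)

lemma aux_lam_monotone (B : Module.Basis ι K A) : Monotone (lam B) :=
  monotone_nat_of_le_succ fun n => aux_lam_mono B n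

lemma aux_lam_acyclic (B : Module.Basis ι K A) :
    ∀ n, ∀ i ∈ lam B n, ¬ IsCyclicVertex (edge B) i := by
  intro n
  induction n with
  | zero => intro i hi; cases hi
  | succ n ih =>
    rintro i hi ⟨j, hij, hjj⟩
    rcases hij.cases_head with rfl | ⟨k, hik, hkj⟩
    · rcases Relation.TransGen.head'_iff.mp hjj with ⟨k, hik, hki⟩
      exact ih k (hi k hik) ⟨i, hki, hjj⟩
    · exact ih k (hi k hik) ⟨j, hkj, hjj⟩

lemma aux_lam_stab (B : Module.Basis ι K A) {n : ℕ} (h : lam B (n + 1) = lam B n) :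
    ∀ m, lam B (n + m) = lam B n
  | 0 => rfl
  | m + 1 => by
    have e : lam B (n + m + 1) = lam B (n + 1) := by
      have := aux_lam_stab B h m
      show {i | ∀ k, edge B i k → k ∈ lam B (n + m)}
          = {i | ∀ k, edge B i k → k ∈ lam B n}
      rw [this]
    rw [show n + (m + 1) = n + m + 1 from rfl, e, h]

lemma aux_lam_exists_stab (B : Module.Basis ι K A) [Finite ι] :
    ∃ n, lam B (n + 1) = lam B n := by
  obtain ⟨a, b, hab, he⟩ := Finite.exists_ne_map_eq_of_infinite (lam B)
  rcases lt_or_gt_of_ne hab with h | h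
  · exact ⟨a, subset_antisymm (he ▸ aux_lam_monotone B (by omega : a + 1 ≤ b))
      (aux_lam_mono B a)⟩
  · exact ⟨b, subset_antisymm (he.symm ▸ aux_lam_monotone B (by omega : b + 1 ≤ a))
      (aux_lam_mono B b)⟩

lemma aux_acyclic_mem_lam (B : Module.Basis ι K A) [Finite ι] {n : ℕ}
    (hst : lam B (n + 1) = lam B n) {i : ι} (hi : ¬ IsCyclicVertex (edge B) i) :
    i ∈ lam B n := by
  by_contra hmem
  have step : ∀ x : {j // j ∉ lam B n}, ∃ k : {j // j ∉ lam B n}, edge B x.1 k.1 := by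
    rintro ⟨j, hj⟩
    by_contra h
    push_neg at h
    apply hj
    rw [← hst]
    intro k hk
    by_contra hk'
    exact h ⟨k, hk'⟩ hk
  choose g hg using step
  set s : ℕ → {j // j ∉ lam B n} := fun m => g^[m] ⟨i, hmem⟩ with hs
  have hedge : ∀ m, edge B (s m).1 (s (m + 1)).1 := by
    intro m
    have : s (m + 1) = g (s m) := Function.iterate_succ_apply' g m _
    rw [this]
    exact hg (s m)
  have hchain : ∀ a b : ℕ, a ≤ b → Relation.ReflTransGen (edge B) (s a).1 (s b).1 := by
    intro a b hab
    induction b, hab using Nat.le_induction with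
    | base => exact Relation.ReflTransGen.refl
    | succ b hb ih => exact ih.tail (hedge b)
  obtain ⟨a, b, hab, he⟩ := Finite.exists_ne_map_eq_of_infinite s
  rcases lt_or_gt_of_ne hab with h | h
  · refine hi ⟨(s a).1, hchain 0 a (Nat.zero_le a), ?_⟩
    have : Relation.ReflTransGen (edge B) (s (a + 1)).1 (s a).1 := by
      have := hchain (a + 1) b h
      rwa [← he] at this
    exact Relation.TransGen.head' (hedge a) this
  · refine hi ⟨(s b).1, hchain 0 b (Nat.zero_le b), ?_⟩
    have : Relation.ReflTransGen (edge B) (s (b + 1)).1 (s b).1 := by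
      have := hchain (b + 1) a h
      rwa [he] at this
    exact Relation.TransGen.head' (hedge b) this

lemma aux_mul_basis [Fintype ι] (B : Module.Basis ι K A) (hB : IsNaturalBasis B) (x : A) (j : ι) :
    x * B j = B.repr x j • (B j * B j) := by
  conv_lhs => rw [← B.sum_repr x]
  rw [Finset.sum_mul, Finset.sum_eq_single j]
  · rw [smul_mul_assoc]
  · intro i _ hij; rw [smul_mul_assoc, hB i j hij, smul_zero]
  · intro h; exact absurd (Finset.mem_univ j) h

lemma aux_ann_eq_span [Fintype ι] (B : Module.Basis ι K A) (hB : IsNaturalBasis B) :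
    ∀ n, annSeries K A n = Submodule.span K (B '' lam B n) := by
  intro n
  induction n with
  | zero =>
    show (⊥ : Submodule K A) = Submodule.span K (B '' (∅ : Set ι))
    rw [Set.image_empty, Submodule.span_empty]
  | succ n ih =>
    ext x
    rw [aux_mem_ann_succ, Module.Basis.mem_span_image]
    constructor
    · intro h j hj
      rw [Finset.mem_coe, Finsupp.mem_support_iff] at hj
      rw [aux_mem_lam_succ]
      intro k hk
      have hxj := (h (B j)).1
      rw [ih, aux_mul_basis B hB x j, Module.Basis.mem_span_image] at hxj
      apply hxj
      rw [Finset.mem_coe, Finsupp.mem_support_iff, map_smul, Finsupp.smul_apply, smul_eq_mul]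
      exact mul_ne_zero hj hk
    · intro h
      have key : ∀ j, x * B j ∈ annSeries K A n := by
        intro j
        rw [ih, aux_mul_basis B hB x j, Module.Basis.mem_span_image]
        intro k hk
        rw [Finset.mem_coe, Finsupp.mem_support_iff, map_smul, Finsupp.smul_apply, smul_eq_mul] at hk
        have hx : B.repr x j ≠ 0 := fun h0 => hk (by rw [h0, zero_mul])
        have hw : edge B j k := fun h0 => hk (by rw [h0, mul_zero])
        exact h (Finset.mem_coe.mpr (Finsupp.mem_support_iff.mpr hx)) k hw
      have hx : ∀ b : A, x * b ∈ annSeries K A n := by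
        intro b
        have hb : x * b = ∑ j, B.repr b j • (x * B j) := by
          calc x * b = x * ∑ j, B.repr b j • B j := by rw [B.sum_repr]
            _ = ∑ j, B.repr b j • (x * B j) := by
                rw [Finset.mul_sum]
                exact Finset.sum_congr rfl fun j _ => mul_smul_comm _ _ _
        rw [hb]
        exact Submodule.sum_mem _ fun j _ => Submodule.smul_mem _ _ (key j)
      exact fun a => ⟨hx a, aux_mul_comm B hB x a ▸ hx a⟩

lemma aux_ann_stab {n : ℕ} (h : annSeries K A (n + 1) = annSeries K A n) :
    ∀ m, annSeries K A (n + m) = annSeries K A n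
  | 0 => rfl
  | m + 1 => by
    have e := aux_ann_stab h m
    have e2 : annSeries K A (n + m + 1) = annSeries K A (n + 1) := by
      ext x
      rw [aux_mem_ann_succ, aux_mem_ann_succ, e]
    rw [show n + (m + 1) = n + m + 1 from rfl, e2, h]

lemma aux_ann_le (n : ℕ) : ∀ I : Submodule K A, IsIdeal I → HasAbsorption I →
    annSeries K A n ≤ I := by
  induction n with
  | zero => intro I _ _; exact bot_le
  | succ n ih =>
    intro I hI habs x hx
    exact habs x fun a => ih I hI habs (aux_mem_ann_succ.mp hx a).1

end AuxEvolution


/-- The absorption radical is spanned by the basis vectors corresponding to the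
acyclic vertices of `Γ(A,B)`; equivalently `λ_m(B)` is the set of acyclic
vertices, where `m = asi(A)`. -/
theorem stmt9 {K : Type*} [Field K] {A : Type*} [NonUnitalNonAssocRing A]
    [Module K A] [SMulCommClass K A A] [IsScalarTower K A A]
    {ι : Type*} [Fintype ι] (B : Module.Basis ι K A) (hB : IsNaturalBasis B) :
    rad K A = Submodule.span K (B '' {i | ¬ IsCyclicVertex (edge B) i}) ∧
      lam B (asi K A) = {i | ¬ IsCyclicVertex (edge B) i} := by
  
  classical
  obtain ⟨N, hN⟩ := aux_lam_exists_stab B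
  have hannN : annSeries K A N = annSeries K A (N + 1) := by
    rw [aux_ann_eq_span B hB, aux_ann_eq_span B hB, hN]
  have hasi : annSeries K A (asi K A) = annSeries K A (asi K A + 1) := by
    have h : sInf {q : ℕ | annSeries K A q = annSeries K A (q + 1)} ∈
        {q : ℕ | annSeries K A q = annSeries K A (q + 1)} := Nat.sInf_mem ⟨N, hannN⟩
    exact h
  set m := asi K A with hm
  have hstab : ∀ k, annSeries K A (m + k) = annSeries K A m := aux_ann_stab hasi.symm
  have hlamstab : ∀ k, lam B (m + k) = lam B m := by
    intro k
    apply subset_antisymm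
    · intro i hi
      have hBi : B i ∈ annSeries K A (m + k) := by
        rw [aux_ann_eq_span B hB]
        exact Submodule.subset_span ⟨i, hi, rfl⟩
      rw [hstab k, aux_ann_eq_span B hB, Module.Basis.mem_span_image] at hBi
      apply hBi
      rw [Finset.mem_coe, Finsupp.mem_support_iff, B.repr_self]
      simp
    · exact aux_lam_monotone B (Nat.le_add_right m k)
  have h2 : lam B m = {i | ¬ IsCyclicVertex (edge B) i} := by
    apply subset_antisymm
    · intro i hi
      exact aux_lam_acyclic B m i hi
    · intro i hi
      have h3 : i ∈ lam B N := aux_acyclic_mem_lam B hN hi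
      have h4 : i ∈ lam B (m + N) := aux_lam_monotone B (Nat.le_add_left N m) h3
      rwa [hlamstab N] at h4
  refine ⟨?_, h2⟩
  rw [← h2, ← aux_ann_eq_span B hB]
  unfold rad
  apply le_antisymm
  · apply sInf_le
    constructor
    · intro x hx a
      rw [hasi] at hx
      exact aux_mem_ann_succ.mp hx a
    · intro x hx
      rw [hasi]
      exact aux_mem_ann_succ.mpr fun a => ⟨hx a, aux_mul_comm B hB x a ▸ hx a⟩
  · exact le_sInf fun I hI => aux_ann_le m I hI.1 hI.2
end

section
/- Let A be a finite-dimensional evolution algebra. Then rad(A) is a nilpotent ideal of A. -/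
open Submodule

section Aux

variable {K : Type*} [Field K] {A : Type*} [NonUnitalNonAssocRing A]
  [Module K A] [SMulCommClass K A A] [IsScalarTower K A A] {ι : Type*}

lemma mem_annSeries_succ {x : A} {n : ℕ} :
    x ∈ annSeries K A (n + 1) ↔ ∀ a : A, x * a ∈ annSeries K A n ∧ a * x ∈ annSeries K A n :=
  Iff.rfl

lemma annSeries_le_succ (n : ℕ) : annSeries K A n ≤ annSeries K A (n + 1) := by
  induction n with
  | zero => exact bot_le
  | succ m ih =>
    intro x hx
    rw [mem_annSeries_succ] at hx ⊢
    exact fun a => ⟨ih (hx a).1, ih (hx a).2⟩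

lemma annSeries_monotone : Monotone (annSeries K A) :=
  monotone_nat_of_le_succ annSeries_le_succ

lemma mul_mem_annSeries_pred {n : ℕ} {x : A} (hx : x ∈ annSeries K A n) (y : A) :
    x * y ∈ annSeries K A (n - 1) ∧ y * x ∈ annSeries K A (n - 1) := by
  cases n with
  | zero =>
    have : x = 0 := by simpa [annSeries] using hx
    subst this; simp
  | succ m => exact hx y

lemma annSeries_isIdeal (n : ℕ) : IsIdeal (annSeries K A n) := by
  intro x hx a
  have h := mul_mem_annSeries_pred hx a
  exact ⟨annSeries_monotone (Nat.sub_le n 1) h.1, annSeries_monotone (Nat.sub_le n 1) h.2⟩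

lemma evolution_mul_comm [Fintype ι] (B : Module.Basis ι K A) (hB : IsNaturalBasis B)
    (x y : A) : x * y = y * x := by
  have key : ∀ i j : ι, (B.repr x i • B i) * (B.repr y j • B j)
      = (B.repr y j • B j) * (B.repr x i • B i) := by
    intro i j
    rcases eq_or_ne i j with h | h
    · subst h
      rw [smul_mul_assoc, smul_mul_assoc, mul_smul_comm, mul_smul_comm, smul_comm]
    · rw [smul_mul_assoc, mul_smul_comm, hB i j h, smul_mul_assoc, mul_smul_comm,
        hB j i h.symm] <;> simp
  conv_lhs => rw [← B.sum_repr x, ← B.sum_repr y]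
  conv_rhs => rw [← B.sum_repr x, ← B.sum_repr y]
  rw [Finset.sum_mul, Finset.sum_mul]
  simp_rw [Finset.mul_sum]
  rw [Finset.sum_comm]
  exact Finset.sum_congr rfl fun i _ => Finset.sum_congr rfl fun j _ => key j i

lemma npow_mono {I J : Submodule K A} (h : I ≤ J) : ∀ k, npow I k ≤ npow J k := by
  intro k
  induction k using Nat.strong_induction_on with
  | _ k IH =>
    match k with
    | 0 => rw [npow, npow]
    | 1 => rw [npow, npow]; exact h
    | m + 2 =>
      rw [npow, npow]
      refine iSup_mono fun i => Submodule.span_mono (Set.image2_subset ?_ ?_)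
      · exact IH (i.1 + 1) (by have := i.isLt; omega)
      · exact IH (m + 1 - i.1) (by have := i.isLt; omega)

lemma npow_annSeries_le (n : ℕ) :
    ∀ k, 1 ≤ k → ∀ j : ℕ, 2 ^ j ≤ k → npow (annSeries K A n) k ≤ annSeries K A (n - j) := by
  intro k
  induction k using Nat.strong_induction_on with
  | _ k IH =>
    match k with
    | 0 => intro h; omega
    | 1 =>
      intro _ j hj
      have hj0 : j = 0 := by
        by_contra hne
        have : 2 ^ 1 ≤ 2 ^ j := Nat.pow_le_pow_right (by norm_num) (by omega)
        omega
      subst hj0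
      rw [npow]
      simp
    | m + 2 =>
      intro _ j hj
      rw [npow]
      refine iSup_le fun i => ?_
      rw [smulSub]
      rw [Submodule.span_le]
      rintro z hz
      obtain ⟨u, hu, v, hv, rfl⟩ := hz
      have hi := i.isLt
      cases j with
      | zero =>
        have hu' : u ∈ annSeries K A n := by
          have := IH (i.1 + 1) (by omega) (by omega) 0 (by simpa using Nat.one_le_iff_ne_zero.mpr (by omega))
          simpa using this hu
        have := (mul_mem_annSeries_pred hu' v).1
        exact annSeries_monotone (by omega) this
      | succ j' =>
        have hsplit : 2 ^ j' ≤ i.1 + 1 ∨ 2 ^ j' ≤ m + 1 - i.1 := by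
          by_contra hc
          push_neg at hc
          have : 2 ^ (j' + 1) = 2 ^ j' + 2 ^ j' := by ring
          omega
        have hsub : n - j' - 1 = n - (j' + 1) := by omega
        rcases hsplit with hs | hs
        · have hu' : u ∈ annSeries K A (n - j') :=
            IH (i.1 + 1) (by omega) (by omega) j' hs hu
          have := (mul_mem_annSeries_pred hu' v).1
          rwa [hsub] at this
        · have hv' : v ∈ annSeries K A (n - j') :=
            IH (m + 1 - i.1) (by omega) (by omega) j' hs hv
          have := (mul_mem_annSeries_pred hv' u).2
          rwa [hsub] at this

end Aux

/-- The absorption radical of a finite-dimensional evolution algebra is a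
nilpotent ideal. -/
theorem stmt10 {K : Type*} [Field K] {A : Type*} [NonUnitalNonAssocRing A]
    [Module K A] [SMulCommClass K A A] [IsScalarTower K A A]
    {ι : Type*} [Fintype ι] (B : Module.Basis ι K A) (hB : IsNaturalBasis B) :
    IsIdeal (rad K A) ∧ ∃ k : ℕ, 0 < k ∧ npow (rad K A) k = ⊥ := by
  refine ⟨rad_isIdeal, ?_⟩
  -- Finite dimensionality: the annihilator chain stabilizes.
  haveI : Module.Finite K A := Module.Finite.of_basis B
  haveI : IsNoetherian K A := inferInstance
  obtain ⟨n₀, hn₀⟩ := monotone_stabilizes_iff_noetherian.mpr ‹IsNoetherian K A›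
    ⟨annSeries K A, annSeries_monotone⟩
  have hstab : annSeries K A n₀ = annSeries K A (n₀ + 1) := hn₀ (n₀ + 1) (by omega)
  set J : Submodule K A := annSeries K A n₀ with hJ
  -- J is an ideal with the absorption property (using commutativity).
  have hJideal : IsIdeal J := annSeries_isIdeal n₀
  have hJabs : HasAbsorption J := by
    intro x hx
    have : x ∈ annSeries K A (n₀ + 1) := by
      rw [mem_annSeries_succ]
      intro a
      exact ⟨hx a, by rw [← evolution_mul_comm B hB]; exact hx a⟩
    rwa [← hstab] at this
  have hradJ : rad K A ≤ J := sInf_le ⟨hJideal, hJabs⟩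
  refine ⟨2 ^ n₀, Nat.pow_pos (by norm_num), ?_⟩
  have h1 : npow (rad K A) (2 ^ n₀) ≤ npow J (2 ^ n₀) := npow_mono hradJ _
  have h2 : npow J (2 ^ n₀) ≤ annSeries K A (n₀ - n₀) :=
    npow_annSeries_le n₀ (2 ^ n₀) (Nat.one_le_two_pow) n₀ le_rfl
  have h3 : annSeries K A (n₀ - n₀) = ⊥ := by
    rw [Nat.sub_self]; rfl
  exact le_bot_iff.mp (h1.trans (h2.trans_eq h3))
end
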